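/- Let T > 0 and let ρ be a finite Borel measure on [0,T]. Let A_k, A ⊆ [0,T] be Borel sets such that ∫_{[0,t]} 1_{A_k} dρ → ∫_{[0,t]} 1_A dρ for every t ∈ [0,T]. Then ∫_{[0,T]} |1_{A_k} - 1_A| dρ → 0 as k → ∞, i.e. ρ(A_k Δ A) → 0 where Δ denotes symmetric difference. -/

import Mathlib

open MeasureTheory Filter

/-- If indicators of Borel sets `A_k ⊆ [0,T]` satisfy
`∫_{[0,t]} 1_{A_k} dρ → ∫_{[0,t]} 1_A dρ` for all `t ∈ [0,T]`, then
`∫ |1_{A_k} - 1_A| dρ → 0`, i.e. `ρ(A_k Δ A) → 0`. -/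
theorem stmt10 (T : ℝ) (hT : 0 < T) (ρ : Measure ℝ) [IsFiniteMeasure ρ]
    (hρ : ρ (Set.Icc (0 : ℝ) T)ᶜ = 0)
    (A : ℕ → Set ℝ) (B : Set ℝ)
    (hA : ∀ k, MeasurableSet (A k)) (hB : MeasurableSet B)
    (hAsub : ∀ k, A k ⊆ Set.Icc (0 : ℝ) T) (hBsub : B ⊆ Set.Icc (0 : ℝ) T)
    (hconv : ∀ t ∈ Set.Icc (0 : ℝ) T,
      Tendsto (fun k => ∫ x in Set.Icc (0 : ℝ) t, (A k).indicator (fun _ => (1 : ℝ)) x ∂ρ)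
        atTop (nhds (∫ x in Set.Icc (0 : ℝ) t, B.indicator (fun _ => (1 : ℝ)) x ∂ρ))) :
    Tendsto (fun k => ∫ x in Set.Icc (0 : ℝ) T,
        |(A k).indicator (fun _ => (1 : ℝ)) x - B.indicator (fun _ => (1 : ℝ)) x| ∂ρ)
      atTop (nhds 0) ∧
    Tendsto (fun k => ρ (symmDiff (A k) B)) atTop (nhds 0) := by
  -- rewrite the integrals of indicators as measures
  have hint : ∀ (S : Set ℝ), MeasurableSet S → ∀ t : ℝ,
      ∫ x in Set.Icc (0 : ℝ) t, S.indicator (fun _ => (1 : ℝ)) x ∂ρ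
        = (ρ (S ∩ Set.Icc (0 : ℝ) t)).toReal := by
    intro S hS t
    rw [setIntegral_indicator hS, setIntegral_const, Set.inter_comm]
    simp
    rfl
  have hconv' : ∀ t ∈ Set.Icc (0 : ℝ) T,
      Tendsto (fun k => (ρ (A k ∩ Set.Icc (0 : ℝ) t)).toReal) atTop
        (nhds (ρ (B ∩ Set.Icc (0 : ℝ) t)).toReal) := by
    intro t ht
    have := hconv t ht
    simp only [hint _ (hA _), hint _ hB] at this
    exact this
  -- base case for `Iic`
  have hIic : ∀ (S : Set ℝ), S ⊆ Set.Icc (0 : ℝ) T → ∀ t : ℝ, 0 ≤ t →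
      S ∩ Set.Iic t = S ∩ Set.Icc (0 : ℝ) (min t T) := by
    intro S hS t _
    ext x
    constructor
    · rintro ⟨hx, hxt⟩
      exact ⟨hx, (hS hx).1, le_min hxt (hS hx).2⟩
    · rintro ⟨hx, _, hxt⟩
      exact ⟨hx, le_trans hxt (min_le_left _ _)⟩
  have hbase : ∀ t : ℝ, Tendsto (fun k => (ρ (A k ∩ Set.Iic t)).toReal) atTop
      (nhds ((ρ (B ∩ Set.Iic t)).toReal)) := by
    intro t
    rcases lt_or_ge t 0 with ht | ht
    · have he : ∀ (S : Set ℝ), S ⊆ Set.Icc (0 : ℝ) T → S ∩ Set.Iic t = ∅ := by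
        intro S hS
        ext x
        simp only [Set.mem_inter_iff, Set.mem_Iic, Set.mem_empty_iff_false, iff_false]
        rintro ⟨hx, hxt⟩
        exact absurd (le_trans (hS hx).1 hxt) (not_le.mpr ht)
      simp only [fun k => he (A k) (hAsub k), he B hBsub]
      exact tendsto_const_nhds
    · have hm : min t T ∈ Set.Icc (0 : ℝ) T := ⟨le_min ht hT.le, min_le_right _ _⟩
      have := hconv' (min t T) hm
      simp only [← hIic _ (hAsub _) t ht, ← hIic B hBsub t ht] at this
      exact this
  -- main induction: convergence on every Borel set
  have key : ∀ ⦃E : Set ℝ⦄, MeasurableSet E →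
      Tendsto (fun k => (ρ (A k ∩ E)).toReal) atTop (nhds ((ρ (B ∩ E)).toReal)) := by
    have huniv : Tendsto (fun k => (ρ (A k)).toReal) atTop (nhds ((ρ B).toReal)) := by
      have hAk : ∀ k, A k ∩ Set.Iic T = A k :=
        fun k => Set.inter_eq_left.mpr fun x hx => (hAsub k hx).2
      have hB' : B ∩ Set.Iic T = B := Set.inter_eq_left.mpr fun x hx => (hBsub hx).2
      have := hbase T
      simp only [hAk, hB'] at this
      exact this
    refine MeasurableSpace.induction_on_inter (borel_eq_generateFrom_Iic ℝ) isPiSystem_Iic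
      ?_ ?_ ?_ ?_
    · simp
    · rintro t ⟨u, rfl⟩
      exact hbase u
    · intro E hE hTd
      have hsub : ∀ (S : Set ℝ), (ρ (S ∩ Eᶜ)).toReal = (ρ S).toReal - (ρ (S ∩ E)).toReal := by
        intro S
        have h1 : ρ (S ∩ E) + ρ (S \ E) = ρ S := measure_inter_add_diff S hE
        have h2 : S ∩ Eᶜ = S \ E := rfl
        rw [h2]
        have := congrArg ENNReal.toReal h1
        rw [ENNReal.toReal_add (measure_ne_top _ _) (measure_ne_top _ _)] at this
        linarith
      simp only [hsub]
      exact huniv.sub hTd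
    · intro f hdisj hmeas hconvf
      have hmeq : ∀ (S : Set ℝ), MeasurableSet S →
          (ρ (S ∩ ⋃ i, f i)).toReal = ∑' i, (ρ (S ∩ f i)).toReal := by
        intro S hS
        rw [Set.inter_iUnion, measure_iUnion ?_ (fun i => hS.inter (hmeas i)),
          ENNReal.tsum_toReal_eq (fun i => measure_ne_top _ _)]
        exact fun i j hij => (hdisj hij).mono Set.inter_subset_right Set.inter_subset_right
      simp only [fun k => hmeq (A k) (hA k), hmeq B hB]
      refine tendsto_tsum_of_dominated_convergence (bound := fun i => (ρ (f i)).toReal)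
        ?_ hconvf ?_
      · refine ENNReal.summable_toReal ?_
        rw [← measure_iUnion hdisj hmeas]
        exact measure_ne_top _ _
      · refine Eventually.of_forall fun k i => ?_
        rw [Real.norm_eq_abs, abs_of_nonneg ENNReal.toReal_nonneg]
        exact ENNReal.toReal_mono (measure_ne_top _ _)
          (measure_mono Set.inter_subset_right)
  -- consequences of `key`
  have huniv : Tendsto (fun k => (ρ (A k)).toReal) atTop (nhds ((ρ B).toReal)) := by
    have := key MeasurableSet.univ
    simpa using this
  have hBk : Tendsto (fun k => (ρ (A k ∩ B)).toReal) atTop (nhds ((ρ B).toReal)) := by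
    have := key hB
    simpa [Set.inter_self] using this
  -- the symmetric difference
  have hsd : ∀ k, (ρ (symmDiff (A k) B)).toReal
      = ((ρ (A k)).toReal - (ρ (A k ∩ B)).toReal)
        + ((ρ B).toReal - (ρ (A k ∩ B)).toReal) := by
    intro k
    have hd : ρ (symmDiff (A k) B) = ρ (A k \ B) + ρ (B \ A k) := by
      rw [Set.symmDiff_def]
      exact measure_union disjoint_sdiff_sdiff (hB.diff (hA k))
    have h1 : ρ (A k ∩ B) + ρ (A k \ B) = ρ (A k) := measure_inter_add_diff _ hB
    have h2 : ρ (B ∩ A k) + ρ (B \ A k) = ρ B := measure_inter_add_diff _ (hA k)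
    have e1 := congrArg ENNReal.toReal h1
    have e2 := congrArg ENNReal.toReal h2
    rw [ENNReal.toReal_add (measure_ne_top _ _) (measure_ne_top _ _)] at e1 e2
    have e3 := congrArg ENNReal.toReal hd
    rw [ENNReal.toReal_add (measure_ne_top _ _) (measure_ne_top _ _)] at e3
    rw [Set.inter_comm B (A k)] at e2
    linarith
  have htendR : Tendsto (fun k => (ρ (symmDiff (A k) B)).toReal) atTop (nhds 0) := by
    have h := (huniv.sub hBk).add ((tendsto_const_nhds (x := (ρ B).toReal)).sub hBk)
    simp only [sub_self, add_zero] at h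
    simp only [hsd]
    exact h
  constructor
  · -- first claim: rewrite the integrand as the indicator of the symmetric difference
    have hieq : ∀ k, ∫ x in Set.Icc (0 : ℝ) T,
        |(A k).indicator (fun _ => (1 : ℝ)) x - B.indicator (fun _ => (1 : ℝ)) x| ∂ρ
        = (ρ (symmDiff (A k) B)).toReal := by
      intro k
      have heq : ∀ x : ℝ, |(A k).indicator (fun _ => (1 : ℝ)) x
          - B.indicator (fun _ => (1 : ℝ)) x|
          = (symmDiff (A k) B).indicator (fun _ => (1 : ℝ)) x := by
        intro x
        by_cases hx1 : x ∈ A k <;> by_cases hx2 : x ∈ B <;>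
          simp [Set.indicator_apply, hx1, hx2, Set.mem_symmDiff]
      have hsub' : symmDiff (A k) B ∩ Set.Icc (0 : ℝ) T = symmDiff (A k) B := by
        rw [Set.inter_eq_left]
        intro x hx
        rcases Set.mem_symmDiff.mp hx with ⟨h, _⟩ | ⟨h, _⟩
        · exact hAsub k h
        · exact hBsub h
      simp only [heq]
      rw [hint _ ((hA k).symmDiff hB) T, hsub']
    simp only [hieq]
    exact htendR
  · refine (ENNReal.tendsto_toReal_iff (fun k => measure_ne_top _ _)
      (x := 0) (by simp)).mp ?_
    simpa using htendR
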